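/- If G is a connected split graph, then the cd-chromatic number of G equals its clique number: χ_cd(G) = ω(G). -/

import Mathlib

variable {V : Type*}

/-- A cd-coloring with `q` colors: a proper coloring in which every nonempty color class is
contained in the closed neighbourhood of some vertex. -/
def IsCDColoring (G : SimpleGraph V) {q : ℕ} (c : V → Fin q) : Prop :=
  (∀ a b, G.Adj a b → c a ≠ c b) ∧
    ∀ i : Fin q, (∃ v, c v = i) → ∃ y, ∀ v, c v = i → G.Adj y v ∨ v = y

/-- The cd-chromatic number: the least number of colors in a cd-coloring. -/
noncomputable def cdChromaticNumber (G : SimpleGraph V) : ℕ :=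
  sInf {q | ∃ c : V → Fin q, IsCDColoring G c}

/-- The clique number: the largest size of a clique. -/
noncomputable def cliqueNumber (G : SimpleGraph V) : ℕ :=
  sSup {n | ∃ s : Finset V, G.IsNClique n s}

/-- A split graph: the vertex set partitions into a clique and an independent set. -/
def IsSplitGraph (G : SimpleGraph V) : Prop :=
  ∃ C I : Set V, C ∪ I = Set.univ ∧ Disjoint C I ∧ G.IsClique C ∧
    ∀ a ∈ I, ∀ b ∈ I, ¬ G.Adj a b

open Fin.NatCast Fin.CommRing in
/-- Cyclic boundary lemma: if a predicate on `Fin k` is somewhere true and somewhere false,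
then there is an index where it is false but true at the next (cyclic) index. -/
lemma cyclic_exists {k : ℕ} [NeZero k] (f : Fin k → Prop)
    (h1 : ∃ i, f i) (h0 : ∃ i, ¬ f i) : ∃ i, ¬ f i ∧ f (i + 1) := by
  classical
  obtain ⟨j, hj⟩ := h1
  obtain ⟨i, hi⟩ := h0
  have hex : ∃ m : ℕ, f (i + ((m + 1 : ℕ) : Fin k)) := by
    have hji : j ≠ i := fun h => hi (h ▸ hj)
    have hd0 : (j - i) ≠ 0 := fun h => hji (by rwa [sub_eq_zero] at h)
    have hval : 1 ≤ (j - i).val := Nat.one_le_iff_ne_zero.mpr (fun h => hd0 (Fin.ext h))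
    refine ⟨(j - i).val - 1, ?_⟩
    rw [Nat.sub_add_cancel hval, Fin.cast_val_eq_self, show i + (j - i) = j from by ring]
    exact hj
  set m₀ := Nat.find hex with hm₀def
  have hspec : f (i + ((m₀ + 1 : ℕ) : Fin k)) := Nat.find_spec hex
  refine ⟨i + (m₀ : Fin k), ?_, ?_⟩
  · by_cases hz : m₀ = 0
    · rw [hz]; simpa using hi
    · obtain ⟨n, hn⟩ := Nat.exists_eq_succ_of_ne_zero hz
      have hmin : ¬ f (i + ((n + 1 : ℕ) : Fin k)) := Nat.find_min hex (by omega)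
      rw [hn]; exact hmin
  · rw [show ((m₀ + 1 : ℕ) : Fin k) = (m₀ : Fin k) + 1 from by push_cast; ring,
      ← add_assoc] at hspec
    exact hspec

/-- For a connected split graph, the cd-chromatic number equals the clique number. -/
theorem stmt14 [Fintype V] (G : SimpleGraph V) (hconn : G.Connected)
    (hsplit : IsSplitGraph G) :
    cdChromaticNumber G = cliqueNumber G := by
  classical
  obtain ⟨C₀, I₀, hunion, hdisj, hclq₀, hind₀⟩ := hsplit
  -- the property of being the clique side of a split partition
  set Q : Finset V → Prop :=
    fun s => G.IsClique ↑s ∧ ∀ a b : V, a ∉ s → b ∉ s → ¬ G.Adj a b with hQdef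
  have hQ₀ : Q (Set.toFinite C₀).toFinset := by
    constructor
    · rwa [Set.Finite.coe_toFinset]
    · intro a b ha hb
      rw [Set.Finite.mem_toFinset] at ha hb
      have ha' : a ∈ I₀ := by
        have := Set.mem_univ a
        rw [← hunion] at this
        rcases this with h | h
        · exact absurd h ha
        · exact h
      have hb' : b ∈ I₀ := by
        have := Set.mem_univ b
        rw [← hunion] at this
        rcases this with h | h
        · exact absurd h hb
        · exact h
      exact hind₀ a ha' b hb'
  obtain ⟨Cs, hCsQ, hmaxw⟩ :=
    Set.Finite.exists_maximalFor Finset.card _ (Set.toFinite {s : Finset V | Q s}) ⟨_, hQ₀⟩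
  have hclqC : G.IsClique ↑Cs := hCsQ.1
  have hindC : ∀ a b : V, a ∉ Cs → b ∉ Cs → ¬ G.Adj a b := hCsQ.2
  -- maximality: no outside vertex is adjacent to all of Cs
  have hkey : ∀ v, v ∉ Cs → (∀ u ∈ Cs, G.Adj v u) → False := by
    intro v hv hall
    have hQ' : Q (insert v Cs) := by
      constructor
      · rw [Finset.coe_insert]
        exact hclqC.insert (fun b hb _ => hall b hb)
      · intro a b ha hb
        rw [Finset.mem_insert, not_or] at ha hb
        exact hindC a b ha.2 hb.2
    have heq := hmaxw hQ' (Finset.card_le_card (Finset.subset_insert v Cs))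
    rw [Finset.card_insert_of_notMem hv] at heq
    omega
  have hnbrC : ∀ v w, v ∉ Cs → G.Adj v w → w ∈ Cs := by
    intro v w hv hadj
    by_contra hw
    exact hindC v w hv hw hadj
  have hCsne : ∃ u, u ∈ Cs := by
    obtain ⟨v⟩ := hconn.nonempty
    by_cases hv : v ∈ Cs
    · exact ⟨v, hv⟩
    · by_contra h
      push_neg at h
      exact hkey v hv (fun u hu => absurd hu (h u))
  have hk1 : 1 ≤ Cs.card := Finset.card_pos.mpr (by obtain ⟨u, hu⟩ := hCsne; exact ⟨u, hu⟩)
  -- every outside vertex has a neighbour in Cs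
  have hadj_exists : ∀ v, v ∉ Cs → ∃ w ∈ Cs, G.Adj v w := by
    intro v hv
    obtain ⟨u, hu⟩ := hCsne
    have hvu : v ≠ u := fun h => hv (h ▸ hu)
    obtain ⟨p⟩ := hconn.preconnected v u
    cases p with
    | nil => exact absurd rfl hvu
    | cons h q => exact ⟨_, hnbrC v _ hv h, h⟩
  -- every outside vertex has a non-neighbour in Cs
  have hnonadj : ∀ v, v ∉ Cs → ∃ u ∈ Cs, ¬ G.Adj v u := by
    intro v hv
    by_contra h
    push_neg at h
    exact hkey v hv h
  -- clique number equals Cs.card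
  have hbdd : BddAbove {n | ∃ s : Finset V, G.IsNClique n s} := by
    refine ⟨Fintype.card V, ?_⟩
    rintro n ⟨s, hs⟩
    rw [← hs.2]
    exact Finset.card_le_univ s
  have hω1 : Cs.card ≤ cliqueNumber G := le_csSup hbdd ⟨Cs, hclqC, rfl⟩
  have hcl0 : (0 : ℕ) ∈ {n | ∃ s : Finset V, G.IsNClique n s} :=
    ⟨∅, SimpleGraph.isNClique_empty.mpr rfl⟩
  have hω2 : cliqueNumber G ≤ Cs.card := by
    apply csSup_le ⟨0, hcl0⟩
    rintro n ⟨s, hs⟩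
    by_contra hlt
    push_neg at hlt
    have ht1 : (s \ Cs).card ≤ 1 := by
      rw [Finset.card_le_one]
      intro a ha b hb
      rw [Finset.mem_sdiff] at ha hb
      by_contra hne'
      exact hindC a b ha.2 hb.2 (hs.1 ha.1 hb.1 hne')
    have hsplitcard : (s ∩ Cs).card + (s \ Cs).card = s.card :=
      Finset.card_inter_add_card_sdiff s Cs
    have hn : s.card = n := hs.2
    have hge : Cs.card ≤ (s ∩ Cs).card := by omega
    have heqC : s ∩ Cs = Cs :=
      Finset.eq_of_subset_of_card_le Finset.inter_subset_right hge
    have hcc : (s ∩ Cs).card = Cs.card := by rw [heqC]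
    have hpos : 0 < (s \ Cs).card := by omega
    obtain ⟨v, hv⟩ := Finset.card_pos.mp hpos
    rw [Finset.mem_sdiff] at hv
    apply hkey v hv.2
    intro u hu
    have hus : u ∈ s := by
      rw [← heqC] at hu
      exact (Finset.mem_inter.mp hu).1
    have hvu : v ≠ u := by
      intro h
      rw [h] at hv
      exact hv.2 hu
    exact hs.1 hv.1 hus hvu
  have hωk : cliqueNumber G = Cs.card := le_antisymm hω2 hω1
  -- construct a cd-coloring with Cs.card colors
  have hcol : ∃ c : V → Fin Cs.card, IsCDColoring G c := by
    by_cases hcard1 : Cs.card = 1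
    · -- then V is a single vertex
      have hall : ∀ v, v ∈ Cs := by
        intro v
        by_contra hv
        obtain ⟨u, hu, hnadj⟩ := hnonadj v hv
        obtain ⟨w, hw, hadj⟩ := hadj_exists v hv
        have : w = u := Finset.card_le_one.mp hcard1.le w hw u hu
        exact hnadj (this ▸ hadj)
      have hsub : ∀ a b : V, a = b := fun a b =>
        Finset.card_le_one.mp hcard1.le a (hall a) b (hall b)
      refine ⟨fun _ => ⟨0, by omega⟩, ?_, ?_⟩
      · intro a b hab _
        exact hab.ne (hsub a b)
      · rintro i ⟨v, hv⟩
        exact ⟨v, fun w _ => Or.inr (hsub w v)⟩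
    · have hk2 : 2 ≤ Cs.card := by omega
      haveI : NeZero Cs.card := ⟨by omega⟩
      set e := Cs.equivFin with hedef
      have spec : ∀ v, v ∉ Cs →
          ∃ i : Fin Cs.card, ¬ G.Adj (↑(e.symm i)) v ∧ G.Adj (↑(e.symm (i + 1))) v := by
        intro v hv
        refine cyclic_exists (fun i => G.Adj (↑(e.symm i)) v) ?_ ?_
        · obtain ⟨w, hw, hadj⟩ := hadj_exists v hv
          exact ⟨e ⟨w, hw⟩, by simpa using hadj.symm⟩
        · obtain ⟨u, hu, hnadj⟩ := hnonadj v hv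
          exact ⟨e ⟨u, hu⟩, by simpa using fun h => hnadj h.symm⟩
      set c : V → Fin Cs.card :=
        fun v => if h : v ∈ Cs then e ⟨v, h⟩ else (spec v h).choose with hcdef
      have hcC : ∀ v (h : v ∈ Cs), c v = e ⟨v, h⟩ := by
        intro v h
        rw [hcdef]
        exact dif_pos h
      have hcI : ∀ v (h : v ∉ Cs),
          ¬ G.Adj (↑(e.symm (c v))) v ∧ G.Adj (↑(e.symm (c v + 1))) v := by
        intro v h
        have hcv : c v = (spec v h).choose := by
          rw [hcdef]
          exact dif_neg h
        rw [hcv]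
        exact (spec v h).choose_spec
      have hone : ∀ i : Fin Cs.card, i + 1 ≠ i := by
        intro i h
        have h10 : (1 : Fin Cs.card) = 0 := by
          have := congrArg (fun x => x - i) h
          simpa [add_comm, add_sub_cancel_right, sub_self] using this
        have := congrArg Fin.val h10
        rw [Fin.val_one', Fin.val_zero, Nat.mod_eq_of_lt hk2] at this
        omega
      refine ⟨c, ?_, ?_⟩
      · intro a b hab heq
        by_cases ha : a ∈ Cs <;> by_cases hb : b ∈ Cs
        · rw [hcC a ha, hcC b hb] at heq
          exact hab.ne (congrArg Subtype.val (e.injective heq))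
        · have h1 := (hcI b hb).1
          rw [← heq, hcC a ha] at h1
          simp only [Equiv.symm_apply_apply] at h1
          exact h1 hab
        · have h1 := (hcI a ha).1
          rw [heq, hcC b hb] at h1
          simp only [Equiv.symm_apply_apply] at h1
          exact h1 hab.symm
        · exact hindC a b ha hb hab
      · rintro i ⟨v, hv⟩
        refine ⟨↑(e.symm (i + 1)), fun w hw => Or.inl ?_⟩
        by_cases hwC : w ∈ Cs
        · rw [hcC w hwC] at hw
          have hwi : (⟨w, hwC⟩ : ↥Cs) = e.symm i := by
            rw [← hw]; simp
          have hne' : (↑(e.symm (i + 1)) : V) ≠ ↑(e.symm i) := by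
            intro h
            exact hone i (e.symm.injective (Subtype.coe_injective h))
          have hadj : G.Adj ↑(e.symm (i + 1)) ↑(e.symm i) :=
            hclqC (e.symm (i + 1)).2 (e.symm i).2 hne'
          have : (w : V) = ↑(e.symm i) := congrArg Subtype.val hwi
          rw [this]
          exact hadj
        · have h2 := (hcI w hwC).2
          rw [hw] at h2
          exact h2
  -- assemble
  have hS : Cs.card ∈ {q | ∃ c : V → Fin q, IsCDColoring G c} := hcol
  have hlow : ∀ q ∈ {q | ∃ c : V → Fin q, IsCDColoring G c}, cliqueNumber G ≤ q := by
    rintro q ⟨c, hc1, _⟩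
    apply csSup_le ⟨0, hcl0⟩
    rintro n ⟨s, hs⟩
    rw [← hs.2]
    calc s.card ≤ (Finset.univ : Finset (Fin q)).card := by
          apply Finset.card_le_card_of_injOn c (fun a _ => Finset.mem_univ _)
          intro a ha b hb heq
          by_contra hne'
          exact hc1 a b (hs.1 ha hb hne') heq
      _ = q := by simp
  rw [cdChromaticNumber]
  apply le_antisymm
  · calc sInf {q | ∃ c : V → Fin q, IsCDColoring G c} ≤ Cs.card := Nat.sInf_le hS
      _ = cliqueNumber G := hωk.symm
  · exact le_csInf ⟨_, hS⟩ hlow
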